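/- (Goodman's characterizations.) Let t0, y0 ∈ ℝ, a > 0, I = [t0, t0+a], let f : I × ℝ → ℝ be continuous, and let α be a lower solution and β an upper solution of y' = f(t,y), y(t0) = y0 on I with α ≤ β on I. Let φ_* and φ^* denote the least and the greatest solutions of the problem among solutions lying in [α, β] (which exist). Then for every t ∈ I: φ_*(t) = min{ γ(t) : γ is an upper solution of the problem on I with α ≤ γ ≤ β }, and φ^*(t) = max{ γ(t) : γ is a lower solution of the problem on I with α ≤ γ ≤ β }. -/

import Mathlib

open Set

/-- `γ` is a lower solution of `y' = f(t,y)`, `y t0 = y0` on `[t0, t0+a]`: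
continuously differentiable, `γ t0 ≤ y0`, `γ' ≤ f(t, γ)`. -/
def IsLowerSol (t0 y0 a : ℝ) (f : ℝ → ℝ → ℝ) (γ : ℝ → ℝ) : Prop :=
  ∃ γ' : ℝ → ℝ,
    (∀ t ∈ Icc t0 (t0 + a), HasDerivWithinAt γ (γ' t) (Icc t0 (t0 + a)) t) ∧
    ContinuousOn γ' (Icc t0 (t0 + a)) ∧ γ t0 ≤ y0 ∧
    ∀ t ∈ Icc t0 (t0 + a), γ' t ≤ f t (γ t)

/-- `γ` is an upper solution of `y' = f(t,y)`, `y t0 = y0` on `[t0, t0+a]`. -/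
def IsUpperSol (t0 y0 a : ℝ) (f : ℝ → ℝ → ℝ) (γ : ℝ → ℝ) : Prop :=
  ∃ γ' : ℝ → ℝ,
    (∀ t ∈ Icc t0 (t0 + a), HasDerivWithinAt γ (γ' t) (Icc t0 (t0 + a)) t) ∧
    ContinuousOn γ' (Icc t0 (t0 + a)) ∧ y0 ≤ γ t0 ∧
    ∀ t ∈ Icc t0 (t0 + a), f t (γ t) ≤ γ' t

/-- `φ` is a solution of `y' = f(t,y)`, `y t0 = y0` on `[t0, t0+a]`. -/
def IsSol (t0 y0 a : ℝ) (f : ℝ → ℝ → ℝ) (φ : ℝ → ℝ) : Prop :=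
  φ t0 = y0 ∧
    ∀ t ∈ Icc t0 (t0 + a), HasDerivWithinAt φ (f t (φ t)) (Icc t0 (t0 + a)) t


section GoodmanAux

open Filter Topology MeasureTheory intervalIntegral

/-- First-crossing comparison: if `p < q` at `t0` and at every contact point the
derivative of `p` is strictly less than that of `q`, then `p < q` throughout. -/
lemma crossing_lt {t0 b : ℝ} {p q p' q' : ℝ → ℝ}
    (hp : ∀ t ∈ Icc t0 b, HasDerivWithinAt p (p' t) (Icc t0 b) t)
    (hq : ∀ t ∈ Icc t0 b, HasDerivWithinAt q (q' t) (Icc t0 b) t)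
    (h0 : p t0 < q t0)
    (hd : ∀ t ∈ Icc t0 b, p t = q t → p' t < q' t) :
    ∀ t ∈ Icc t0 b, p t < q t := by
  by_contra hcon
  push_neg at hcon
  obtain ⟨t1, ht1, hle⟩ := hcon
  set g : ℝ → ℝ := fun t => q t - p t with hg
  have hgd : ∀ t ∈ Icc t0 b, HasDerivWithinAt g (q' t - p' t) (Icc t0 b) t :=
    fun t ht => (hq t ht).sub (hp t ht)
  have hgc : ContinuousOn g (Icc t0 b) := fun t ht =>
    ((hgd t ht).continuousWithinAt)
  set S : Set ℝ := {t ∈ Icc t0 b | g t ≤ 0} with hS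
  have hSne : S.Nonempty := ⟨t1, ht1, by simp [hg]; linarith⟩
  have hSclosed : IsClosed S := by
    have hSeq : S = Icc t0 b ∩ g ⁻¹' (Iic 0) := by ext x; simp only [hS, mem_sep_iff, mem_inter_iff, mem_preimage, mem_Iic]
    rw [hSeq]
    exact hgc.preimage_isClosed_of_isClosed isClosed_Icc isClosed_Iic
  have hSbdd : BddBelow S := ⟨t0, fun x hx => hx.1.1⟩
  set τ := sInf S with hτ
  have hτS : τ ∈ S := hSclosed.csInf_mem hSne hSbdd
  have hτI : τ ∈ Icc t0 b := hτS.1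
  have ht0τ : t0 < τ := by
    rcases lt_or_eq_of_le hτI.1 with h | h
    · exact h
    · exfalso; have := hτS.2; rw [← h] at this; simp [hg] at this; linarith
  have hpos : ∀ t ∈ Ico t0 τ, 0 < g t := by
    intro t ht
    by_contra hc
    push_neg at hc
    have : t ∈ S := ⟨⟨ht.1, le_trans ht.2.le hτI.2⟩, hc⟩
    exact absurd (csInf_le hSbdd this) (not_le.2 ht.2)
  -- g τ = 0
  have hne : (𝓝[Ico t0 τ] τ).NeBot := by
    refine mem_closure_iff_nhdsWithin_neBot.mp ?_
    rw [closure_Ico (ne_of_lt ht0τ)]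
    exact ⟨le_of_lt ht0τ, le_refl τ⟩
  have hgτ0 : g τ = 0 := by
    have hle0 : g τ ≤ 0 := hτS.2
    have hge : 0 ≤ g τ := by
      have hcw : ContinuousWithinAt g (Ico t0 τ) τ := by
        have := (hgc τ hτI)
        exact this.mono (fun x hx => ⟨hx.1, le_trans hx.2.le hτI.2⟩)
      refine ge_of_tendsto (hcw.tendsto) ?_
      filter_upwards [self_mem_nhdsWithin] with x hx using (hpos x hx).le
    linarith
  have hd' : 0 < q' τ - p' τ := by
    have : p τ = q τ := by simp [hg] at hgτ0; linarith
    have := hd τ hτI this; linarith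
  -- derivative within Icc t0 τ at τ is ≤ 0
  have hmono : HasDerivWithinAt g (q' τ - p' τ) (Icc t0 τ) τ :=
    (hgd τ hτI).mono (Icc_subset_Icc le_rfl hτI.2)
  rw [hasDerivWithinAt_iff_tendsto_slope] at hmono
  have hsub : Icc t0 τ \ {τ} = Ico t0 τ := by
    ext x
    simp only [mem_diff, mem_Icc, mem_singleton_iff, mem_Ico]
    constructor
    · rintro ⟨⟨h1, h2⟩, h3⟩; exact ⟨h1, lt_of_le_of_ne h2 h3⟩
    · rintro ⟨h1, h2⟩; exact ⟨⟨h1, h2.le⟩, ne_of_lt h2⟩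
  rw [hsub] at hmono
  have : q' τ - p' τ ≤ 0 := by
    refine le_of_tendsto hmono ?_
    filter_upwards [self_mem_nhdsWithin] with x hx
    have hx2 : x < τ := hx.2
    have : slope g τ x = g x / (x - τ) := by
      rw [slope_def_field]; rw [hgτ0]; ring_nf
    rw [this]
    exact div_nonpos_of_nonneg_of_nonpos (hpos x hx).le (by linarith)
  linarith


noncomputable section

-- inf-convolution approximations
variable {M : ℝ} {h : ℝ × ℝ → ℝ}

/-- Lipschitz inf-convolution approximation. -/
def infConv (h : ℝ × ℝ → ℝ) (n : ℕ) (p : ℝ × ℝ) : ℝ :=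
  ⨅ q : ℝ × ℝ, (h q + ((n : ℝ) + 1) * dist p q)

lemma infConv_bddBelow (hM : ∀ p, |h p| ≤ M) (n : ℕ) (p : ℝ × ℝ) :
    BddBelow (range fun q : ℝ × ℝ => h q + ((n : ℝ) + 1) * dist p q) := by
  refine ⟨-M, ?_⟩
  rintro x ⟨q, rfl⟩
  dsimp only
  have h1 : -M ≤ h q := neg_le_of_abs_le (hM q)
  have h2 : 0 ≤ ((n : ℝ) + 1) * dist p q :=
    mul_nonneg (by positivity) dist_nonneg
  linarith

lemma infConv_le (hM : ∀ p, |h p| ≤ M) (n : ℕ) (p : ℝ × ℝ) : infConv h n p ≤ h p := by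
  have := ciInf_le (infConv_bddBelow hM n p) p
  simpa [infConv] using this

lemma le_infConv (hM : ∀ p, |h p| ≤ M) (n : ℕ) (p : ℝ × ℝ) : -M ≤ infConv h n p := by
  refine le_ciInf fun q => ?_
  have h1 : -M ≤ h q := neg_le_of_abs_le (hM q)
  have h2 : 0 ≤ ((n : ℝ) + 1) * dist p q := mul_nonneg (by positivity) dist_nonneg
  linarith

lemma infConv_mono (hM : ∀ p, |h p| ≤ M) (n : ℕ) (p : ℝ × ℝ) :
    infConv h n p ≤ infConv h (n + 1) p := by
  refine le_ciInf fun q => ?_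
  refine le_trans (ciInf_le (infConv_bddBelow hM n p) q) ?_
  have : ((n : ℝ) + 1) * dist p q ≤ ((n : ℝ) + 1 + 1) * dist p q := by
    apply mul_le_mul_of_nonneg_right _ dist_nonneg
    linarith
  push_cast
  linarith

lemma infConv_le_add (hM : ∀ p, |h p| ≤ M) (n : ℕ) (p p' : ℝ × ℝ) :
    infConv h n p ≤ infConv h n p' + ((n : ℝ) + 1) * dist p p' := by
  rw [← sub_le_iff_le_add]
  refine le_ciInf fun q => ?_
  rw [sub_le_iff_le_add]
  refine le_trans (ciInf_le (infConv_bddBelow hM n p) q) ?_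
  have hd : dist p q ≤ dist p p' + dist p' q := dist_triangle p p' q
  have hm : ((n : ℝ) + 1) * dist p q ≤ ((n : ℝ) + 1) * (dist p p' + dist p' q) :=
    mul_le_mul_of_nonneg_left hd (by positivity)
  linarith

lemma infConv_lipschitz (hM : ∀ p, |h p| ≤ M) (n : ℕ) (p p' : ℝ × ℝ) :
    |infConv h n p - infConv h n p'| ≤ ((n : ℝ) + 1) * dist p p' := by
  rw [abs_sub_le_iff]
  constructor
  · have := infConv_le_add hM n p p'; linarith
  · have := infConv_le_add hM n p' p; rw [dist_comm] at this; linarith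

lemma infConv_continuous (hM : ∀ p, |h p| ≤ M) (n : ℕ) :
    Continuous (infConv h n) := by
  have : LipschitzWith (⟨(n : ℝ) + 1, by positivity⟩ : NNReal) (infConv h n) := by
    apply LipschitzWith.of_dist_le_mul
    intro p p'
    rw [Real.dist_eq]
    exact infConv_lipschitz hM n p p'
  exact this.continuous

/-- pointwise convergence along a converging sequence of points -/
lemma infConv_tendsto (hM : ∀ p, |h p| ≤ M) (hh : Continuous h)
    {pn : ℕ → ℝ × ℝ} {p : ℝ × ℝ} (hpn : Tendsto pn atTop (𝓝 p)) :
    Tendsto (fun n => infConv h n (pn n)) atTop (𝓝 (h p)) := by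
  rw [Metric.tendsto_atTop]
  intro ε hε
  obtain ⟨δ, hδ, hδ'⟩ := Metric.continuousAt_iff.mp (hh.continuousAt (x := p)) (ε/2) (by linarith)
  obtain ⟨N1, hN1⟩ := (Metric.tendsto_atTop.mp hpn) (δ/2) (by positivity)
  obtain ⟨N2, hN2⟩ := exists_nat_gt ((4 * M)/δ)
  refine ⟨max N1 N2, fun n hn => ?_⟩
  have hn1 : N1 ≤ n := le_trans (le_max_left _ _) hn
  have hn2 : N2 ≤ n := le_trans (le_max_right _ _) hn
  have hpd : dist (pn n) p < δ/2 := hN1 n hn1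
  have hMp : |h p| ≤ M := hM p
  have hnd : 4 * M / δ < (n : ℝ) := lt_of_lt_of_le hN2 (by exact_mod_cast hn2)
  have hnd' : 2 * M ≤ ((n : ℝ) + 1) * (δ/2) := by
    rw [div_lt_iff₀ hδ] at hnd
    nlinarith [hδ]
  -- upper bound
  have hub : infConv h n (pn n) ≤ h p + ε/2 := by
    refine le_trans (infConv_le hM n (pn n)) ?_
    have : dist (pn n) p < δ := by linarith
    have := hδ' this
    rw [Real.dist_eq] at this
    have := abs_sub_le_iff.mp this.le
    linarith [this.1]
  -- lower bound
  have hlb : h p - ε/2 ≤ infConv h n (pn n) := by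
    refine le_ciInf fun q => ?_
    by_cases hq : dist q (pn n) < δ/2
    · have hqp : dist q p < δ := by
        have := dist_triangle q (pn n) p
        linarith
      have := hδ' hqp
      rw [Real.dist_eq] at this
      have h2 := abs_sub_le_iff.mp this.le
      have h3 : 0 ≤ ((n:ℝ)+1) * dist (pn n) q := mul_nonneg (by positivity) dist_nonneg
      linarith [h2.2]
    · push_neg at hq
      have h1 : -M ≤ h q := neg_le_of_abs_le (hM q)
      have h2 : ((n:ℝ)+1) * (δ/2) ≤ ((n:ℝ)+1) * dist (pn n) q := by
        apply mul_le_mul_of_nonneg_left _ (by positivity)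
        rwa [dist_comm]
      have h3 : h p ≤ M := le_of_abs_le hMp
      have hε2 : 0 < ε/2 := by linarith
      linarith
  rw [Real.dist_eq, abs_sub_lt_iff]
  constructor <;> linarith

lemma eps_le {x y c : ℝ} (hc : 0 < c) (h : ∀ ε : ℝ, 0 < ε → x < y + ε * c) : x ≤ y := by
  by_contra hxy
  push_neg at hxy
  have hd : 0 < (x - y)/(2*c) := div_pos (by linarith) (by linarith)
  have := h ((x - y)/(2*c)) hd
  rw [div_mul_eq_mul_div, mul_comm] at this
  have h2 : c * (x-y) / (2*c) = (x-y)/2 := by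
    field_simp
  rw [h2] at this
  linarith

theorem squeeze (t0 y0 a : ℝ) (ha : 0 < a) (f : ℝ → ℝ → ℝ)
    (hf : ContinuousOn (fun p : ℝ × ℝ => f p.1 p.2)
      (Icc t0 (t0 + a) ×ˢ (univ : Set ℝ)))
    (u v : ℝ → ℝ) (hu : IsLowerSol t0 y0 a f u) (hv : IsUpperSol t0 y0 a f v)
    (huv : ∀ t ∈ Icc t0 (t0 + a), u t ≤ v t) :
    ∃ φ : ℝ → ℝ, IsSol t0 y0 a f φ ∧ ∀ t ∈ Icc t0 (t0 + a), u t ≤ φ t ∧ φ t ≤ v t := by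
  obtain ⟨u', hu'd, _, hu0, hu'le⟩ := hu
  obtain ⟨v', hv'd, _, hv0, hv'ge⟩ := hv
  have hta : t0 ≤ t0 + a := by linarith
  have ht0I : t0 ∈ Icc t0 (t0 + a) := ⟨le_rfl, hta⟩
  have hucont : ContinuousOn u (Icc t0 (t0 + a)) := fun t ht => (hu'd t ht).continuousWithinAt
  have hvcont : ContinuousOn v (Icc t0 (t0 + a)) := fun t ht => (hv'd t ht).continuousWithinAt
  have hy0 : u t0 ≤ y0 ∧ y0 ≤ v t0 := ⟨hu0, hv0⟩
  -- the projection onto the interval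
  set π : ℝ → ℝ := fun t => (projIcc t0 (t0 + a) hta t : ℝ) with hπ
  have hπc : Continuous π := continuous_subtype_val.comp continuous_projIcc
  have hπmem : ∀ t, π t ∈ Icc t0 (t0 + a) := fun t => (projIcc t0 (t0 + a) hta t).2
  have hπeq : ∀ t ∈ Icc t0 (t0 + a), π t = t := fun t ht => by
    simp [hπ, projIcc_of_mem hta ht]
  have hπlip : ∀ s t : ℝ, |π s - π t| ≤ |s - t| := by
    intro s t
    have := (LipschitzWith.projIcc hta).dist_le_mul s t
    rw [Subtype.dist_eq, Real.dist_eq, Real.dist_eq] at this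
    simpa using this
  -- truncation
  set cl : ℝ → ℝ → ℝ := fun t y => max (u (π t)) (min y (v (π t))) with hcl
  have hclL : ∀ t y, u (π t) ≤ cl t y := fun t y => le_max_left _ _
  have hclR : ∀ t y, cl t y ≤ v (π t) :=
    fun t y => max_le (huv _ (hπmem t)) (min_le_right _ _)
  have hclcont : Continuous fun p : ℝ × ℝ => cl p.1 p.2 := by
    have h1 : Continuous fun p : ℝ × ℝ => u (π p.1) :=
      (hucont.comp_continuous (hπc.comp continuous_fst) (fun p => hπmem _))
    have h2 : Continuous fun p : ℝ × ℝ => v (π p.1) :=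
      (hvcont.comp_continuous (hπc.comp continuous_fst) (fun p => hπmem _))
    exact h1.max (continuous_snd.min h2)
  set h : ℝ × ℝ → ℝ := fun p => f (π p.1) (cl p.1 p.2) with hh
  have hhc : Continuous h := by
    have hmap : Continuous fun p : ℝ × ℝ => ((π p.1, cl p.1 p.2) : ℝ × ℝ) :=
      (hπc.comp continuous_fst).prodMk hclcont
    rw [← continuousOn_univ]
    exact hf.comp hmap.continuousOn (fun p _ => ⟨hπmem _, mem_univ _⟩)
  -- bound on h
  obtain ⟨Bu, hBu⟩ := isCompact_Icc.exists_bound_of_continuousOn hucont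
  obtain ⟨Bv, hBv⟩ := isCompact_Icc.exists_bound_of_continuousOn hvcont
  set B : ℝ := max Bu Bv with hB
  have hKc : IsCompact (Icc t0 (t0 + a) ×ˢ Icc (-B) B) :=
    isCompact_Icc.prod isCompact_Icc
  obtain ⟨M, hMb⟩ := hKc.exists_bound_of_continuousOn
    (hf.mono (prod_mono_right (subset_univ _)))
  have hM : ∀ p, |h p| ≤ M := by
    intro p
    have h1 : cl p.1 p.2 ∈ Icc (-B) B := by
      constructor
      · refine le_trans ?_ (hclL p.1 p.2)
        have := hBu _ (hπmem p.1)
        rw [Real.norm_eq_abs] at this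
        have h2 : |u (π p.1)| ≤ B := le_trans this (le_max_left _ _)
        linarith [neg_le_of_abs_le h2, abs_nonneg (u (π p.1))]
      · refine le_trans (hclR p.1 p.2) ?_
        have := hBv _ (hπmem p.1)
        rw [Real.norm_eq_abs] at this
        exact le_trans (le_of_abs_le this) (le_max_right _ _)
    have := hMb (π p.1, cl p.1 p.2) ⟨hπmem _, h1⟩
    rw [Real.norm_eq_abs] at this
    exact this
  have hM0 : 0 ≤ M := le_trans (abs_nonneg _) (hM (t0, 0))
  -- Picard-Lindelöf for each approximation
  have pl : ∀ n : ℕ, IsPicardLindelof (fun t y => infConv h n (t, y)) (tmin := t0)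
      (tmax := t0 + a) ⟨t0, ht0I⟩ y0 (⟨M * a + 1, by positivity⟩ : NNReal) 0 (⟨M, hM0⟩ : NNReal)
      (⟨(n : ℝ) + 1, by positivity⟩ : NNReal) := by
    intro n
    refine ⟨?_, ?_, ?_, ?_⟩
    · intro t _
      apply LipschitzOnWith.of_dist_le_mul
      intro y _ y' _
      rw [Real.dist_eq]
      refine le_trans (infConv_lipschitz hM n (t, y) (t, y')) ?_
      have : dist ((t : ℝ), y) (t, y') = dist y y' := by
        rw [Prod.dist_eq, dist_self]
        exact max_eq_right dist_nonneg
      rw [this, Real.dist_eq]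
      exact le_rfl
    · intro x _
      exact ((infConv_continuous hM n).comp
        (continuous_id.prodMk continuous_const)).continuousOn
    · intro t _ x _
      rw [Real.norm_eq_abs, abs_le]
      exact ⟨le_infConv hM n _, le_trans (infConv_le hM n _) (le_of_abs_le (hM _))⟩
    · have : max (t0 + a - t0) (t0 - t0) = a := by
        rw [max_eq_left (by linarith)]; ring
      simp only [NNReal.coe_mk, NNReal.coe_zero, sub_zero, tsub_zero]
      rw [this]
      change M * a ≤ M * a + 1
      linarith
  choose φ hφ0 hφd using (fun n : ℕ =>
    (pl n).exists_eq_forall_mem_Icc_hasDerivWithinAt₀ : ∀ n : ℕ, ∃ α : ℝ → ℝ, α t0 = y0 ∧ ∀ t ∈ Icc t0 (t0 + a), HasDerivWithinAt α (infConv h n (t, α t)) (Icc t0 (t0 + a)) t)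
  have hφcont : ∀ n, ContinuousOn (φ n) (Icc t0 (t0 + a)) :=
    fun n t ht => (hφd n t ht).continuousWithinAt
  -- Lipschitz bound on each φ n
  have hφlip : ∀ n, ∀ s ∈ Icc t0 (t0 + a), ∀ t ∈ Icc t0 (t0 + a),
      |φ n s - φ n t| ≤ M * |s - t| := by
    intro n s hs t ht
    have := (convex_Icc t0 (t0 + a)).norm_image_sub_le_of_norm_hasDerivWithin_le
      (f' := fun t => infConv h n (t, φ n t)) (hφd n)
      (fun x _ => by
        rw [Real.norm_eq_abs, abs_le]
        exact ⟨le_infConv hM n _, le_trans (infConv_le hM n _) (le_of_abs_le (hM _))⟩)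
      ht hs
    rw [Real.norm_eq_abs, Real.norm_eq_abs] at this
    exact this
  have hφbd : ∀ n, ∀ t ∈ Icc t0 (t0 + a), |φ n t - y0| ≤ M * a := by
    intro n t ht
    have h1 := hφlip n t ht t0 ht0I
    rw [hφ0 n] at h1
    refine le_trans h1 ?_
    have h2 : |t - t0| ≤ a := by
      rw [abs_of_nonneg (by linarith [ht.1])]
      linarith [ht.2]
    exact mul_le_mul_of_nonneg_left h2 hM0
  -- monotone step
  have hstep : ∀ n : ℕ, ∀ t ∈ Icc t0 (t0 + a), φ n t ≤ φ (n + 1) t := by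
    intro n
    set L : ℝ := (n : ℝ) + 2 with hL
    have hLpos : 0 < L := by positivity
    have key : ∀ ε : ℝ, 0 < ε → ∀ t ∈ Icc t0 (t0 + a),
        φ n t < φ (n + 1) t + ε * Real.exp (2 * L * (t - t0)) := by
      intro ε hε
      refine crossing_lt (p' := fun t => infConv h n (t, φ n t))
        (q' := fun t => infConv h (n + 1) (t, φ (n + 1) t) +
          ε * (Real.exp (2 * L * (t - t0)) * (2 * L))) (hφd n) ?_ ?_ ?_
      · intro t ht
        refine (hφd (n + 1) t ht).add ?_
        have hinner : HasDerivAt (fun t : ℝ => 2 * L * (t - t0)) (2 * L) t := by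
          simpa using ((hasDerivAt_id t).sub_const t0).const_mul (2 * L)
        have := (hinner.exp.const_mul ε).hasDerivWithinAt
          (s := Icc t0 (t0 + a))
        exact this
      · rw [hφ0 n, hφ0 (n + 1)]
        simp [hε]
      · intro t ht hcontact
        set e : ℝ := Real.exp (2 * L * (t - t0)) with he
        have hepos : 0 < e := Real.exp_pos _
        have h1 : infConv h n (t, φ n t) ≤ infConv h (n + 1) (t, φ n t) :=
          infConv_mono hM n _
        have h2 : infConv h (n + 1) (t, φ n t) ≤
            infConv h (n + 1) (t, φ (n + 1) t) + L * (ε * e) := by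
          refine le_trans (infConv_le_add hM (n + 1) (t, φ n t) (t, φ (n + 1) t)) ?_
          have hd : dist ((t : ℝ), φ n t) (t, φ (n + 1) t) = ε * e := by
            rw [Prod.dist_eq, dist_self, max_eq_right dist_nonneg, Real.dist_eq, hcontact]
            have heq : (φ (n + 1) t + ε * e) - φ (n + 1) t = ε * e := by ring
            rw [heq, abs_of_nonneg (mul_nonneg hε.le hepos.le)]
          have hcast : ((n + 1 : ℕ) : ℝ) + 1 = L := by rw [hL]; push_cast; ring
          rw [hd, hcast]
        have h3 : L * (ε * e) < ε * (e * (2 * L)) := by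
          have hp : 0 < L * (ε * e) := mul_pos hLpos (mul_pos hε hepos)
          have h4 : ε * (e * (2 * L)) = 2 * (L * (ε * e)) := by ring
          linarith
        linarith
    intro t ht
    refine eps_le (c := Real.exp (2 * L * a)) (Real.exp_pos _) fun ε hε => ?_
    have h1 := key (ε * Real.exp (2 * L * a) / Real.exp (2 * L * (t - t0)))
      (by positivity) t ht
    rw [div_mul_cancel₀] at h1
    · exact h1
    · exact ne_of_gt (Real.exp_pos _)
  have hstep' : ∀ t ∈ Icc t0 (t0 + a), Monotone fun n => φ n t := by
    intro t ht
    exact monotone_nat_of_le_succ fun n => hstep n t ht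
  -- the limit function
  set ψ : ℕ → ℝ → ℝ := fun n t => φ n (π t) with hψ
  have hψmono : ∀ t, Monotone fun n => ψ n t := fun t => hstep' (π t) (hπmem t)
  have hψbdd : ∀ t, BddAbove (range fun n => ψ n t) := by
    intro t
    refine ⟨y0 + M * a, ?_⟩
    rintro x ⟨n, rfl⟩
    have := hφbd n (π t) (hπmem t)
    have h2 := (abs_le.mp this).1
    have h3 := (abs_le.mp this).2
    dsimp only
    rw [hψ]
    linarith
  set Φ : ℝ → ℝ := fun t => ⨆ n, ψ n t with hΦ
  have hΦtend : ∀ t, Tendsto (fun n => ψ n t) atTop (𝓝 (Φ t)) :=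
    fun t => tendsto_atTop_ciSup (hψmono t) (hψbdd t)
  have hψeq : ∀ n, ∀ t ∈ Icc t0 (t0 + a), ψ n t = φ n t := by
    intro n t ht
    rw [hψ]
    dsimp only
    rw [hπeq t ht]
  have hΦ0 : Φ t0 = y0 := by
    have : ∀ n, ψ n t0 = y0 := fun n => by rw [hψeq n t0 ht0I, hφ0 n]
    rw [hΦ]
    dsimp only
    rw [funext this]
    exact ciSup_const
  have hΦlipkey : ∀ s t : ℝ, Φ s ≤ Φ t + M * |s - t| := by
    intro s t
    refine ciSup_le fun n => ?_
    have h1 : ψ n s ≤ ψ n t + M * |s - t| := by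
      have h2 := hφlip n (π s) (hπmem s) (π t) (hπmem t)
      have h3 : M * |π s - π t| ≤ M * |s - t| :=
        mul_le_mul_of_nonneg_left (hπlip s t) hM0
      have h4 := (abs_le.mp (le_trans h2 h3)).2
      rw [hψ]
      dsimp only
      linarith
    refine le_trans h1 ?_
    have := le_ciSup (hψbdd t) n
    linarith
  have hΦcont : Continuous Φ := by
    have : LipschitzWith (Real.toNNReal M) Φ := by
      apply LipschitzWith.of_dist_le_mul
      intro s t
      rw [Real.dist_eq, Real.dist_eq, Real.coe_toNNReal M hM0, abs_sub_le_iff]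
      constructor
      · have := hΦlipkey s t; linarith
      · have := hΦlipkey t s; rw [abs_sub_comm] at this; linarith
    exact this.continuous
  -- integral equation for each approximation
  have hinteq : ∀ n : ℕ, ∀ t ∈ Icc t0 (t0 + a),
      φ n t = y0 + ∫ s in t0..t, infConv h n (s, φ n s) := by
    intro n t ht
    have hsub : Icc t0 t ⊆ Icc t0 (t0 + a) := Icc_subset_Icc le_rfl ht.2
    have hcont : ContinuousOn (φ n) (Icc t0 t) := (hφcont n).mono hsub
    have hderiv : ∀ x ∈ Ioo t0 t, HasDerivAt (φ n) (infConv h n (x, φ n x)) x := by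
      intro x hx
      have hxI : x ∈ Icc t0 (t0 + a) := ⟨hx.1.le, le_trans hx.2.le ht.2⟩
      refine (hφd n x hxI).hasDerivAt ?_
      exact Icc_mem_nhds (lt_of_lt_of_le hx.1 (le_refl x)) (lt_of_lt_of_le hx.2 ht.2)
    have hgcont : ContinuousOn (fun s => infConv h n (s, φ n s)) (Icc t0 t) :=
      (infConv_continuous hM n).comp_continuousOn
        (continuousOn_id.prodMk hcont)
    have hint : IntervalIntegrable (fun s => infConv h n (s, φ n s)) volume t0 t := by
      rw [intervalIntegrable_iff_integrableOn_Icc_of_le ht.1]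
      exact hgcont.integrableOn_compact isCompact_Icc
    have := integral_eq_sub_of_hasDeriv_right_of_le ht.1 hcont
      (fun x hx => (hderiv x hx).hasDerivWithinAt) hint
    rw [this, hφ0 n]
    ring
  -- pass to the limit
  have hΦinteq : ∀ t ∈ Icc t0 (t0 + a), Φ t = y0 + ∫ s in t0..t, h (s, Φ s) := by
    intro t ht
    have hlhs : Tendsto (fun n => φ n t) atTop (𝓝 (Φ t)) := by
      have := hΦtend t
      convert this using 2 with n
      rw [hψeq n t ht]
    have hrhs : Tendsto (fun n => y0 + ∫ s in t0..t, infConv h n (s, φ n s)) atTop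
        (𝓝 (y0 + ∫ s in t0..t, h (s, Φ s))) := by
      refine tendsto_const_nhds.add ?_
      refine tendsto_integral_filter_of_dominated_convergence (fun _ => M) ?_ ?_ ?_ ?_
      · refine Eventually.of_forall fun n => ?_
        have : ContinuousOn (fun s => infConv h n (s, φ n s)) (Icc t0 (t0 + a)) :=
          (infConv_continuous hM n).comp_continuousOn (continuousOn_id.prodMk (hφcont n))
        have h2 : AEStronglyMeasurable (fun s => infConv h n (s, φ n s))
            (volume.restrict (Icc t0 (t0 + a))) :=
          this.aestronglyMeasurable measurableSet_Icc
        refine h2.mono_measure (Measure.restrict_mono ?_ le_rfl)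
        rw [uIoc_of_le ht.1]
        exact fun x hx => ⟨hx.1.le, le_trans hx.2 ht.2⟩
      · refine Eventually.of_forall fun n => Eventually.of_forall fun x _ => ?_
        rw [Real.norm_eq_abs, abs_le]
        exact ⟨le_infConv hM n _, le_trans (infConv_le hM n _) (le_of_abs_le (hM _))⟩
      · exact intervalIntegrable_const
      · refine Eventually.of_forall fun x hx => ?_
        rw [uIoc_of_le ht.1] at hx
        have hxI : x ∈ Icc t0 (t0 + a) := ⟨hx.1.le, le_trans hx.2 ht.2⟩
        have hps : Tendsto (fun n => ((x : ℝ), φ n x)) atTop (𝓝 (x, Φ x)) := by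
          refine (tendsto_const_nhds).prodMk_nhds ?_
          have := hΦtend x
          convert this using 2 with n
          rw [hψeq n x hxI]
        exact infConv_tendsto hM hhc hps
    have : Tendsto (fun n => φ n t) atTop (𝓝 (y0 + ∫ s in t0..t, h (s, Φ s))) := by
      convert hrhs using 2 with n
      exact hinteq n t ht
    exact tendsto_nhds_unique hlhs this
  -- Φ is differentiable with derivative h (t, Φ t)
  set g : ℝ → ℝ := fun s => h (s, Φ s) with hg
  have hgc : Continuous g := hhc.comp (continuous_id.prodMk hΦcont)
  have hGd : ∀ t : ℝ, HasDerivAt (fun r => y0 + ∫ s in t0..r, g s) (g t) t := by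
    intro t
    refine HasDerivAt.const_add y0 ?_
    refine integral_hasDerivAt_right (hgc.intervalIntegrable t0 t)
      (hgc.stronglyMeasurable.stronglyMeasurableAtFilter) hgc.continuousAt
  have hΦd : ∀ t ∈ Icc t0 (t0 + a), HasDerivWithinAt Φ (g t) (Icc t0 (t0 + a)) t := by
    intro t ht
    exact ((hGd t).hasDerivWithinAt).congr (fun s hs => hΦinteq s hs) (hΦinteq t ht)
  -- Φ stays below v
  have hΦlev : ∀ t ∈ Icc t0 (t0 + a), Φ t ≤ v t := by
    intro t ht
    have key : ∀ ε : ℝ, 0 < ε → ∀ t ∈ Icc t0 (t0 + a),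
        Φ t < v t + ε * (t - t0) + ε := by
      intro ε hε
      refine crossing_lt (p' := g) (q' := fun t => v' t + ε) hΦd ?_ ?_ ?_
      · intro t ht
        refine ((hv'd t ht).add ?_).add_const ε
        have : HasDerivAt (fun t : ℝ => ε * (t - t0)) ε t := by
          simpa using ((hasDerivAt_id t).sub_const t0).const_mul ε
        exact this.hasDerivWithinAt
      · rw [hΦ0]
        have : v t0 ≤ v t0 + ε * (t0 - t0) + ε := by
          simp
          linarith
        linarith [hy0.2]
      · intro τ hτ hcontact
        have hvle : v τ < Φ τ := by
          rw [hcontact]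
          have h1 : 0 ≤ τ - t0 := by linarith [hτ.1]
          nlinarith
        have hclval : cl τ (Φ τ) = v τ := by
          rw [hcl]
          dsimp only
          rw [hπeq τ hτ]
          rw [min_eq_right hvle.le, max_eq_right (huv τ hτ)]
        have hgval : g τ = f τ (v τ) := by
          rw [hg]
          dsimp only
          rw [hh]
          dsimp only
          rw [hπeq τ hτ, hclval]
        rw [hgval]
        have := hv'ge τ hτ
        linarith
    refine eps_le (c := (a + 1)) (by linarith) fun ε hε => ?_
    have h1 := key (ε * (a+1) / (a+1+1)) (by positivity) t ht
    have h2 : ε * (a+1) / (a+1+1) * (t - t0) + ε * (a+1) / (a+1+1)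
        ≤ ε * (a + 1) := by
      have h3 : t - t0 ≤ a := by linarith [ht.2]
      have h4 : 0 ≤ ε * (a+1) / (a+1+1) := by positivity
      have h5 : ε * (a+1) / (a+1+1) * (t - t0) ≤ ε * (a+1) / (a+1+1) * a :=
        mul_le_mul_of_nonneg_left h3 h4
      have h6 : ε * (a+1) / (a+1+1) * a + ε * (a+1) / (a+1+1)
          = ε * (a+1) * ((a + 1) / (a+1+1)) := by ring
      have h7 : (a + 1) / (a+1+1) ≤ 1 := by
        rw [div_le_one (by linarith)]
        linarith
      have h8 : ε * (a+1) * ((a + 1) / (a+1+1)) ≤ ε * (a+1) * 1 :=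
        mul_le_mul_of_nonneg_left h7 (by positivity)
      linarith
    linarith
  -- Φ stays above u
  have hΦgeu : ∀ t ∈ Icc t0 (t0 + a), u t ≤ Φ t := by
    intro t ht
    have key : ∀ ε : ℝ, 0 < ε → ∀ t ∈ Icc t0 (t0 + a),
        u t - ε * (t - t0) - ε < Φ t := by
      intro ε hε
      refine crossing_lt (p' := fun t => u' t - ε) (q' := g) ?_ hΦd ?_ ?_
      · intro t ht
        refine ((hu'd t ht).sub ?_).sub_const ε
        have : HasDerivAt (fun t : ℝ => ε * (t - t0)) ε t := by
          simpa using ((hasDerivAt_id t).sub_const t0).const_mul ε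
        exact this.hasDerivWithinAt
      · rw [hΦ0]
        have h1 : u t0 - ε * (t0 - t0) - ε = u t0 - ε := by ring
        rw [h1]
        linarith [hy0.1]
      · intro τ hτ hcontact
        have huge : Φ τ < u τ := by
          rw [← hcontact]
          have h1 : 0 ≤ τ - t0 := by linarith [hτ.1]
          nlinarith
        have hclval : cl τ (Φ τ) = u τ := by
          rw [hcl]
          dsimp only
          rw [hπeq τ hτ]
          rw [min_eq_left (le_trans huge.le (huv τ hτ)), max_eq_left huge.le]
        have hgval : g τ = f τ (u τ) := by
          rw [hg]
          dsimp only
          rw [hh]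
          dsimp only
          rw [hπeq τ hτ, hclval]
        rw [hgval]
        have := hu'le τ hτ
        linarith
    by_contra hcon
    push_neg at hcon
    set d : ℝ := u t - Φ t with hd
    have hdpos : 0 < d := by rw [hd]; linarith
    have h1 := key (d / (2 * (a + 1))) (by positivity) t ht
    have h2 : d / (2 * (a + 1)) * (t - t0) + d / (2 * (a + 1)) ≤ d / 2 := by
      have h3 : t - t0 ≤ a := by linarith [ht.2]
      have h4 : 0 ≤ d / (2 * (a+1)) := by positivity
      have h5 : d / (2 * (a+1)) * (t - t0) ≤ d / (2 * (a+1)) * a :=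
        mul_le_mul_of_nonneg_left h3 h4
      have h6 : d / (2 * (a+1)) * a + d / (2 * (a+1)) = d / 2 * ((a + 1) / (a+1)) := by
        field_simp
      have h7 : (a + 1) / (a+1) = 1 := div_self (by linarith)
      rw [h7, mul_one] at h6
      linarith
    rw [hd] at h1 h2
    linarith
  -- conclusion
  refine ⟨Φ, ⟨hΦ0, ?_⟩, fun t ht => ⟨hΦgeu t ht, hΦlev t ht⟩⟩
  intro t ht
  have hclval : cl t (Φ t) = Φ t := by
    rw [hcl]
    dsimp only
    rw [hπeq t ht]
    rw [min_eq_left (hΦlev t ht), max_eq_right (hΦgeu t ht)]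
  have hgval : g t = f t (Φ t) := by
    rw [hg]
    dsimp only
    rw [hh]
    dsimp only
    rw [hπeq t ht, hclval]
  rw [← hgval]
  exact hΦd t ht


end

end GoodmanAux

/-- Goodman's characterizations: if `φlow`/`φhigh` are the least/greatest solutions
in the sector `[α, β]` determined by a lower solution `α` and an upper solution `β`
with `α ≤ β`, then `φlow t` is the minimum value at `t` of all upper solutions lying
in `[α, β]`, and `φhigh t` is the maximum value at `t` of all lower solutions lying
in `[α, β]`. -/
theorem goodman_characterizations (t0 y0 a : ℝ) (ha : 0 < a)
    (f : ℝ → ℝ → ℝ)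
    (hf : ContinuousOn (fun p : ℝ × ℝ => f p.1 p.2)
      (Icc t0 (t0 + a) ×ˢ (univ : Set ℝ)))
    (α β : ℝ → ℝ)
    (hα : IsLowerSol t0 y0 a f α) (hβ : IsUpperSol t0 y0 a f β)
    (hαβ : ∀ t ∈ Icc t0 (t0 + a), α t ≤ β t)
    (φlow φhigh : ℝ → ℝ)
    (hlowSol : IsSol t0 y0 a f φlow)
    (hlowMem : ∀ t ∈ Icc t0 (t0 + a), α t ≤ φlow t ∧ φlow t ≤ β t)
    (hlowLeast : ∀ φ : ℝ → ℝ, IsSol t0 y0 a f φ →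
      (∀ t ∈ Icc t0 (t0 + a), α t ≤ φ t ∧ φ t ≤ β t) →
      ∀ t ∈ Icc t0 (t0 + a), φlow t ≤ φ t)
    (hhighSol : IsSol t0 y0 a f φhigh)
    (hhighMem : ∀ t ∈ Icc t0 (t0 + a), α t ≤ φhigh t ∧ φhigh t ≤ β t)
    (hhighGreatest : ∀ φ : ℝ → ℝ, IsSol t0 y0 a f φ →
      (∀ t ∈ Icc t0 (t0 + a), α t ≤ φ t ∧ φ t ≤ β t) →
      ∀ t ∈ Icc t0 (t0 + a), φ t ≤ φhigh t) :
    ∀ t ∈ Icc t0 (t0 + a),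
      IsLeast {x : ℝ | ∃ γ : ℝ → ℝ, IsUpperSol t0 y0 a f γ ∧
        (∀ s ∈ Icc t0 (t0 + a), α s ≤ γ s ∧ γ s ≤ β s) ∧ x = γ t} (φlow t) ∧
      IsGreatest {x : ℝ | ∃ γ : ℝ → ℝ, IsLowerSol t0 y0 a f γ ∧
        (∀ s ∈ Icc t0 (t0 + a), α s ≤ γ s ∧ γ s ≤ β s) ∧ x = γ t} (φhigh t) := by
  intro t ht
  have hI : ∀ φ : ℝ → ℝ, (∀ s ∈ Icc t0 (t0 + a),
      HasDerivWithinAt φ (f s (φ s)) (Icc t0 (t0 + a)) s) →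
      ContinuousOn (fun s => f s (φ s)) (Icc t0 (t0 + a)) := by
    intro φ hd
    have hφc : ContinuousOn φ (Icc t0 (t0 + a)) := fun s hs => (hd s hs).continuousWithinAt
    exact hf.comp (continuousOn_id.prodMk hφc) (fun s hs => ⟨hs, mem_univ _⟩)
  constructor
  · constructor
    · exact ⟨φlow, ⟨fun s => f s (φlow s), hlowSol.2, hI φlow hlowSol.2,
        le_of_eq hlowSol.1.symm, fun s _ => le_rfl⟩, hlowMem, rfl⟩
    · rintro x ⟨γ, hγup, hγmem, rfl⟩
      obtain ⟨φ, hφsol, hφmem⟩ := squeeze t0 y0 a ha f hf α γ hα hγup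
        (fun s hs => (hγmem s hs).1)
      have hmem' : ∀ s ∈ Icc t0 (t0 + a), α s ≤ φ s ∧ φ s ≤ β s := fun s hs =>
        ⟨(hφmem s hs).1, le_trans (hφmem s hs).2 (hγmem s hs).2⟩
      exact le_trans (hlowLeast φ hφsol hmem' t ht) (hφmem t ht).2
  · constructor
    · exact ⟨φhigh, ⟨fun s => f s (φhigh s), hhighSol.2, hI φhigh hhighSol.2,
        le_of_eq hhighSol.1, fun s _ => le_rfl⟩, hhighMem, rfl⟩
    · rintro x ⟨γ, hγlow, hγmem, rfl⟩
      obtain ⟨φ, hφsol, hφmem⟩ := squeeze t0 y0 a ha f hf γ β hγlow hβ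
        (fun s hs => (hγmem s hs).2)
      have hmem' : ∀ s ∈ Icc t0 (t0 + a), α s ≤ φ s ∧ φ s ≤ β s := fun s hs =>
        ⟨le_trans (hγmem s hs).1 (hφmem s hs).1, (hφmem s hs).2⟩
      exact le_trans (hφmem t ht).1 (hhighGreatest φ hφsol hmem' t ht)
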